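/- Let p be a prime number, k a field of characteristic p, and η ∈ k[[x]] a formal power series. Define Δ : k[[x]] → k[[x]] by Δ(f) = ∂f − η·f, where ∂ is the formal derivative. Then Δ^p is identically zero on k[[x]] if and only if there exists a non-zero power series f ∈ k[[x]] with ∂f = η·f. -/

import Mathlib

open PowerSeries

private lemma coeff_deriv_iterate {k : Type*} [Field k] (f : PowerSeries k) (j n : ℕ) :
    coeff n (PowerSeries.derivativeFun^[j] f) =
      coeff (n + j) f * ((n + j).descFactorial j : k) := by
  induction j generalizing n with
  | zero => simp
  | succ j ih =>
    rw [Function.iterate_succ_apply',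
      show ∀ (f : k⟦X⟧) n, coeff n f.derivativeFun = coeff (n + 1) f * (n + 1) from coeff_derivative,
      ih (n + 1)]
    have h1 : n + 1 + j = n + (j + 1) := by ring
    have h2 : n + (j + 1) - j = n + 1 := by omega
    rw [h1, Nat.descFactorial_succ, h2]
    push_cast
    ring

private lemma deriv_iterate_p_eq_zero {p : ℕ} (hp : p.Prime) {k : Type*} [Field k] [CharP k p]
    (f : PowerSeries k) : PowerSeries.derivativeFun^[p] f = 0 := by
  ext n
  rw [coeff_deriv_iterate, map_zero]
  have hdvd : p ∣ (n + p).descFactorial p :=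
    dvd_trans (Nat.dvd_factorial hp.pos le_rfl) (Nat.factorial_dvd_descFactorial _ _)
  rw [(CharP.cast_eq_zero_iff k p _).mpr hdvd, mul_zero]

private lemma conj_iterate {k : Type*} [Field k]
    (η : PowerSeries k) (Δ : PowerSeries k → PowerSeries k)
    (hΔ : ∀ f : PowerSeries k, Δ f = f.derivativeFun - η * f)
    {g : PowerSeries k} (hg : g.derivativeFun = η * g) (n : ℕ) (h : PowerSeries k) :
    Δ^[n] (g * h) = g * PowerSeries.derivativeFun^[n] h := by
  induction n generalizing h with
  | zero => simp
  | succ n ih =>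
    rw [Function.iterate_succ_apply', Function.iterate_succ_apply', ih, hΔ,
      derivativeFun_mul, hg]
    set H := PowerSeries.derivativeFun^[n] h
    simp only [smul_eq_mul]
    ring

/-- If `k` is a field of prime characteristic `p`, `η ∈ k[[x]]`, and `Δ(f) = ∂f − η·f`,
then the `p`-curvature `Δ^p` vanishes identically if and only if the equation `∂f = η·f`
has a non-zero power series solution. -/
theorem p_curvature_zero_iff_solution
    (p : ℕ) (hp : p.Prime) (k : Type*) [Field k] [CharP k p]
    (η : PowerSeries k) (Δ : PowerSeries k → PowerSeries k)
    (hΔ : ∀ f : PowerSeries k, Δ f = f.derivativeFun - η * f) :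
    (∀ f : PowerSeries k, Δ^[p] f = 0) ↔
      ∃ f : PowerSeries k, f ≠ 0 ∧ f.derivativeFun = η * f := by
  constructor
  · intro H
    have hex : ∃ j, Δ^[j] (1 : PowerSeries k) = 0 := ⟨p, H 1⟩
    classical
    have hj0 : Δ^[Nat.find hex] (1 : PowerSeries k) = 0 := Nat.find_spec hex
    have hjpos : Nat.find hex ≠ 0 := by
      intro h0
      rw [h0, Function.iterate_zero_apply] at hj0
      exact one_ne_zero hj0
    obtain ⟨i, hi⟩ := Nat.exists_eq_succ_of_ne_zero hjpos
    refine ⟨Δ^[i] 1, Nat.find_min hex (by omega), ?_⟩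
    have h0 : Δ (Δ^[i] 1) = 0 := by
      rw [← Function.iterate_succ_apply' Δ i 1, ← hi]; exact hj0
    rw [hΔ] at h0
    exact sub_eq_zero.mp h0
  · rintro ⟨f, hf, hdf⟩
    -- decompose f = X^m * g with g a unit
    set m := f.order.lift (order_finite_iff_ne_zero.mpr hf) with hm
    set g := divXPowOrder f with hgdef
    have hfact : X ^ m * g = f := by
      rw [hm, ENat.lift_eq_toNat_of_lt_top]; exact X_pow_order_mul_divXPowOrder
    have horder : f.order = (m : ℕ∞) := (ENat.coe_lift _ _).symm
    -- (m : k) = 0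
    have hmk : (m : k) = 0 := by
      rcases Nat.eq_zero_or_pos m with h0 | hpos
      · rw [h0]; exact Nat.cast_zero
      · obtain ⟨s, hs⟩ := Nat.exists_eq_succ_of_ne_zero hpos.ne'
        have h1 : coeff s f.derivativeFun = coeff s (η * f) := by rw [hdf]
        have h2 : coeff s (η * f) = 0 := by
          refine coeff_mul_of_lt_order ?_
          rw [horder, hs]
          exact_mod_cast Nat.lt_succ_self s
        rw [show ∀ (f : k⟦X⟧) n, coeff n f.derivativeFun = coeff (n + 1) f * (n + 1) from coeff_derivative,
          h2] at h1
        have h3 : coeff (s + 1) f ≠ 0 := by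
          have := coeff_order hf
          rwa [← ENat.lift_eq_toNat_of_lt_top (order_finite_iff_ne_zero.mpr hf), ← hm, hs] at this
        rcases mul_eq_zero.mp h1 with h | h
        · exact absurd h h3
        · rw [hs]; exact_mod_cast h
    -- derivative of X ^ m is zero
    have hXm : (X ^ m : PowerSeries k).derivativeFun = 0 := by
      have : (X ^ m : PowerSeries k).derivativeFun = d⁄dX k (X ^ m) := rfl
      rw [this, Derivation.leibniz_pow, derivative_X, smul_eq_mul, mul_one]
      rw [nsmul_eq_mul, (map_natCast C m).symm, hmk, map_zero, zero_mul]
    -- g satisfies the same ODE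
    have hdg : g.derivativeFun = η * g := by
      have h1 : f.derivativeFun = X ^ m * g.derivativeFun := by
        rw [← hfact, derivativeFun_mul, hXm, smul_zero, add_zero, smul_eq_mul]
      have h2 : η * f = X ^ m * (η * g) := by rw [← hfact]; ring
      have hXne : (X : PowerSeries k) ^ m ≠ 0 := pow_ne_zero _ X_ne_zero
      exact mul_left_cancel₀ hXne (by rw [← h1, hdf, h2])
    -- g is a unit
    obtain ⟨u, hu⟩ := isUnit_divided_by_X_pow_order hf
    intro t
    have ht : t = g * ((↑u⁻¹ : PowerSeries k) * t) := by
      rw [← mul_assoc, ← hgdef] at *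
      rw [← hu, ← Units.val_mul, mul_inv_cancel, Units.val_one, one_mul]
    rw [ht, conj_iterate η Δ hΔ hdg, deriv_iterate_p_eq_zero hp, mul_zero]
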